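/- Let (X, 𝒜, μ) be a probability space and let f : X → X be a bijection such that f and f⁻¹ are measurable, f preserves μ, and f is ergodic with respect to μ. Let φ : X → ℝ be measurable with 0 ≤ φ(x) ≤ 1 for all x. If the set { x ∈ X : φ(f^{−n}(x)) → 1 as n → ∞ } has positive μ-measure, then φ(x) = 1 for μ-almost every x ∈ X. -/

import Mathlib

open MeasureTheory Filter

/-- If `f` is an ergodic measure-preserving bijection of a probability space and
`φ : X → [0,1]` is measurable such that `φ (f⁻ⁿ x) → 1` on a set of positive measure,
then `φ = 1` almost everywhere. -/
theorem stmt4 {X : Type*} [MeasurableSpace X] (μ : Measure X) [IsProbabilityMeasure μ]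
    (f : X ≃ᵐ X) (hf : Ergodic f μ)
    (φ : X → ℝ) (hφmeas : Measurable φ) (hφ01 : ∀ x, φ x ∈ Set.Icc (0:ℝ) 1)
    (hpos : 0 < μ {x | Tendsto (fun n => φ ((⇑f.symm)^[n] x)) atTop (nhds 1)}) :
    ∀ᵐ x ∂μ, φ x = 1 := by
  set g : X → X := ⇑f.symm with hg
  have hgmp : MeasurePreserving g μ μ := (MeasurePreserving.symm f hf.toMeasurePreserving)
  have hcons : Conservative g μ := hgmp.conservative
  set S : Set X := {x | Tendsto (fun n => φ (g^[n] x)) atTop (nhds 1)} with hS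
  -- S is measurable
  have hSmeas : MeasurableSet S := by
    have : ∀ n, Measurable fun x => φ (g^[n] x) := fun n =>
      hφmeas.comp (f.symm.measurable.iterate n)
    exact measurableSet_tendsto _ this
  -- S is f-invariant
  have hSinv : f ⁻¹' S = S := by
    ext x
    simp only [Set.mem_preimage, hS, Set.mem_setOf_eq]
    constructor
    · intro h
      have := h.comp (tendsto_add_atTop_nat 1)
      simpa [Function.iterate_succ_apply, Function.comp_def, hg] using this
    · intro h
      rw [← tendsto_add_atTop_iff_nat 1]
      convert h using 2 with n
      simp [Function.iterate_succ_apply, hg]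
  have hSfull : μ S = 1 := by
    rcases hf.ae_empty_or_univ hSmeas hSinv with h | h
    · exfalso
      have : μ S = 0 := by simpa using measure_congr h
      simp [this] at hpos
    · calc μ S = μ Set.univ := measure_congr h
        _ = 1 := measure_univ
  -- for each k, the set A_k where φ ≤ 1 - 1/(k+1) is null
  have hAk : ∀ k : ℕ, μ {x | φ x ≤ 1 - 1/(k+1 : ℝ)} = 0 := by
    intro k
    set A : Set X := {x | φ x ≤ 1 - 1/(k+1 : ℝ)} with hA
    have hAmeas : MeasurableSet A := hφmeas measurableSet_Iic
    by_contra hA0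
    -- B: set of points visiting A infinitely often under g
    set B : Set X := {x | ∃ᶠ n in atTop, g^[n] x ∈ A} with hB
    have hBmeas : MeasurableSet B := by
      have : B = ⋂ N, ⋃ n, ⋃ _ : N ≤ n, g^[n] ⁻¹' A := by
        ext x
        simp [hB, frequently_atTop, Set.mem_iInter, Set.mem_iUnion]
      rw [this]
      exact MeasurableSet.iInter fun N => MeasurableSet.iUnion fun n =>
        MeasurableSet.iUnion fun _ => (f.symm.measurable.iterate n) hAmeas
    have hBinv : f ⁻¹' B = B := by
      ext x
      simp only [Set.mem_preimage, hB, Set.mem_setOf_eq]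
      constructor
      · intro h
        rw [frequently_atTop] at h ⊢
        intro N
        obtain ⟨n, hn, hmem⟩ := h (N+1)
        refine ⟨n - 1, by omega, ?_⟩
        have : g^[n] (f x) = g^[n-1] x := by
          have : n = (n-1) + 1 := by omega
          rw [this, Function.iterate_succ_apply]
          simp [hg]
        rwa [this] at hmem
      · intro h
        rw [frequently_atTop] at h ⊢
        intro N
        obtain ⟨n, hn, hmem⟩ := h N
        refine ⟨n + 1, by omega, ?_⟩
        rwa [Function.iterate_succ_apply, show g (f x) = x by simp [hg]]
    -- a.e. point of A is in B (Poincaré recurrence)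
    have hAB : μ (A \ B) = 0 := by
      have := hcons.ae_mem_imp_frequently_image_mem hAmeas.nullMeasurableSet
      rw [ae_iff] at this
      refine measure_mono_null ?_ this
      intro x hx
      simp only [Set.mem_diff, hB, Set.mem_setOf_eq] at hx
      simp only [Set.mem_setOf_eq]
      tauto
    have hBpos : μ B ≠ 0 := by
      intro h0
      apply hA0
      have : μ A ≤ μ (A \ B) + μ B := by
        refine (measure_mono ?_).trans (measure_union_le _ _)
        intro x hx
        by_cases hxB : x ∈ B
        · exact Or.inr hxB
        · exact Or.inl ⟨hx, hxB⟩
      simpa [hAB, h0] using le_antisymm (this.trans (by simp [hAB, h0])) zero_le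
    have hBfull : μ B = 1 := by
      rcases hf.ae_empty_or_univ hBmeas hBinv with h | h
      · exact absurd (by simpa using measure_congr h) hBpos
      · calc μ B = μ Set.univ := measure_congr h
          _ = 1 := measure_univ
    -- S ∩ B has positive measure, pick a point, contradiction
    have hScompl : μ Sᶜ = 0 := by
      rw [measure_compl hSmeas (measure_ne_top μ S), hSfull]
      simp
    have hSB : μ (S ∩ B) ≠ 0 := by
      intro h0
      have hsub : B ⊆ (S ∩ B) ∪ Sᶜ := by
        intro x hx
        by_cases hxS : x ∈ S
        · exact Or.inl ⟨hxS, hx⟩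
        · exact Or.inr hxS
      have : μ B ≤ μ (S ∩ B) + μ Sᶜ := (measure_mono hsub).trans (measure_union_le _ _)
      rw [h0, hScompl] at this
      simp only [add_zero, le_zero_iff] at this
      rw [hBfull] at this
      exact one_ne_zero this
    obtain ⟨x, hxS, hxB⟩ : (S ∩ B).Nonempty := by
      rcases Set.eq_empty_or_nonempty (S ∩ B) with h | h
      · exact absurd (by simp [h]) hSB
      · exact h
    -- contradiction: tendsto 1 but frequently ≤ 1 - 1/(k+1)
    have hfreq : ∃ᶠ n in atTop, φ (g^[n] x) ≤ 1 - 1/(k+1 : ℝ) := hxB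
    have hlim : Tendsto (fun n => φ (g^[n] x)) atTop (nhds 1) := hxS
    have : ∀ᶠ n in atTop, (1 : ℝ) - 1/(k+1) < φ (g^[n] x) := by
      have hlt : (1:ℝ) - 1/(k+1) < 1 := by
        have : (0:ℝ) < 1/(k+1) := by positivity
        linarith
      exact hlim.eventually (eventually_gt_nhds hlt)
    rcases (hfreq.and_eventually this).exists with ⟨n, h1, h2⟩
    linarith
  -- conclude
  have : μ {x | φ x < 1} = 0 := by
    have hsub : {x | φ x < 1} ⊆ ⋃ k : ℕ, {x | φ x ≤ 1 - 1/(k+1 : ℝ)} := by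
      intro x hx
      simp only [Set.mem_setOf_eq] at hx
      obtain ⟨k, hk⟩ := exists_nat_gt (1/(1 - φ x))
      refine Set.mem_iUnion.2 ⟨k, ?_⟩
      simp only [Set.mem_setOf_eq]
      have h1 : (0:ℝ) < 1 - φ x := by linarith
      have hk' : 1/(1 - φ x) < k + 1 := by linarith
      have : 1/((k:ℝ)+1) < 1 - φ x := by
        rw [div_lt_iff₀ (by positivity)]
        rw [div_lt_iff₀ h1] at hk'
        linarith [mul_comm (1 - φ x) ((k:ℝ)+1)]
      linarith
    exact measure_mono_null hsub (by rw [← le_zero_iff]; refine (measure_iUnion_le _).trans ?_; simp only [one_div] at hAk; simp [hAk])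
  rw [ae_iff]
  refine measure_mono_null ?_ this
  intro x hx
  simp only [Set.mem_setOf_eq] at hx ⊢
  exact lt_of_le_of_ne (hφ01 x).2 hx
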